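/- Let G' = G minus edge (a,b) with dist_G(v,a) + 1 = dist_G(v,b). If spc_G(v,a) < spc_G(v,b), then dist_{G'}(v,b) = dist_G(v,b) and spc_{G'}(v,b) = spc_G(v,b) − spc_G(v,a). -/

import Mathlib

open SimpleGraph

/-- The number of shortest paths between `v` and `u` in `G`. -/
noncomputable def spc {V : Type*} (G : SimpleGraph V) (v u : V) : ℕ :=
  {p : G.Walk v u | p.IsPath ∧ p.length = G.dist v u}.ncard

theorem stmt_12 {V : Type*} (G : SimpleGraph V) (a b : V) (hadj : G.Adj a b)
    (G' : SimpleGraph V) (hG' : G' = G.deleteEdges {s(a, b)}) (v : V)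
    (hreach : G.Reachable v a)
    (hd : G.dist v a + 1 = G.dist v b) (hc : spc G v a < spc G v b) :
    G'.edist v b = G.edist v b ∧ spc G' v b = spc G v b - spc G v a := by
  classical
  have hle : G' ≤ G := hG' ▸ G.deleteEdges_le _
  have hreachb : G.Reachable v b := hreach.trans hadj.reachable
  have hvb : v ≠ b := by
    rintro rfl
    rw [SimpleGraph.dist_self] at hd
    omega
  set S : Set (G.Walk v b) := {p : G.Walk v b | p.IsPath ∧ p.length = G.dist v b} with hSdef
  set A : Set (G.Walk v a) := {p : G.Walk v a | p.IsPath ∧ p.length = G.dist v a} with hAdef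
  set S₁ : Set (G.Walk v b) := {p ∈ S | s(a, b) ∈ p.edges} with hS1def
  set S₂ : Set (G.Walk v b) := {p ∈ S | s(a, b) ∉ p.edges} with hS2def
  have hspcb : spc G v b = S.ncard := rfl
  have hspca : spc G v a = A.ncard := rfl
  -- b is not in the support of any shortest walk to a
  have hbA : ∀ p : G.Walk v a, p.length = G.dist v a → b ∉ p.support := by
    intro p hp hb
    have h1 := G.dist_le (p.takeUntil b hb)
    have h2 := p.length_takeUntil_le hb
    omega
  -- the concat map sends A into S₁
  have hF : ∀ p ∈ A, p.concat hadj ∈ S₁ := by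
    rintro p ⟨hp1, hp2⟩
    refine ⟨⟨?_, ?_⟩, ?_⟩
    · rw [← SimpleGraph.Walk.isPath_reverse_iff, SimpleGraph.Walk.reverse_concat,
        SimpleGraph.Walk.cons_isPath_iff]
      refine ⟨hp1.reverse, ?_⟩
      rw [SimpleGraph.Walk.support_reverse, List.mem_reverse]
      exact hbA p hp2
    · rw [SimpleGraph.Walk.length_concat]
      omega
    · simp [SimpleGraph.Walk.edges_concat]
  have hFinj : Function.Injective (fun p : G.Walk v a => p.concat hadj) := by
    intro p q h
    have h' := congrArg SimpleGraph.Walk.reverse h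
    simp only [SimpleGraph.Walk.reverse_concat, SimpleGraph.Walk.cons.injEq, heq_eq_eq,
      true_and] at h'
    exact SimpleGraph.Walk.reverse_injective h'
  -- the concat map is surjective onto S₁
  have hFsurj : ∀ q ∈ S₁, ∃ p ∈ A, p.concat hadj = q := by
    rintro q ⟨⟨hq1, hq2⟩, hq3⟩
    have hq1' : q.reverse.IsPath := hq1.reverse
    have hq3' : s(a, b) ∈ q.reverse.edges := by
      rw [SimpleGraph.Walk.edges_reverse, List.mem_reverse]; exact hq3
    obtain ⟨x, h', r', hr⟩ := SimpleGraph.Walk.exists_eq_cons_of_ne (Ne.symm hvb) q.reverse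
    rw [hr, SimpleGraph.Walk.edges_cons] at hq3'
    rw [hr, SimpleGraph.Walk.cons_isPath_iff] at hq1'
    have hx : x = a := by
      rcases List.mem_cons.mp hq3' with h | h
      · have := Sym2.eq_iff.mp h
        have hne := hadj.ne
        tauto
      · exfalso
        apply hq1'.2
        exact r'.fst_mem_support_of_mem_edges (by rwa [Sym2.eq_swap] at h)
    subst hx
    have hlen : r'.length + 1 = G.dist v b := by
      have : q.reverse.length = q.length := SimpleGraph.Walk.length_reverse q
      rw [hr] at this
      simp only [SimpleGraph.Walk.length_cons] at this
      omega
    refine ⟨r'.reverse, ⟨hq1'.1.reverse, ?_⟩, ?_⟩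
    · rw [SimpleGraph.Walk.length_reverse]
      omega
    · have : q = (SimpleGraph.Walk.cons h' r').reverse := by
        rw [← hr, SimpleGraph.Walk.reverse_reverse]
      rw [this, SimpleGraph.Walk.reverse_cons]
      exact SimpleGraph.Walk.concat_eq_append _ _
    -- note: r'.reverse.concat hadj = r'.reverse.concat h'.symm by proof irrelevance
  have himg : (fun p : G.Walk v a => p.concat hadj) '' A = S₁ := by
    apply Set.Subset.antisymm
    · rintro _ ⟨p, hp, rfl⟩
      exact hF p hp
    · intro q hq
      obtain ⟨p, hp, hpq⟩ := hFsurj q hq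
      exact ⟨p, hp, hpq⟩
  have hcard1 : S₁.ncard = spc G v a := by
    rw [← himg, Set.ncard_image_of_injOn (hFinj.injOn), hspca]
  have hSfin : S.Finite := by
    by_contra h
    rw [hspcb, Set.Infinite.ncard h] at hc
    omega
  have hunion : S₁ ∪ S₂ = S := by
    ext q
    simp only [hS1def, hS2def, Set.mem_union, Set.mem_sep_iff]
    tauto
  have hdisj : Disjoint S₁ S₂ := by
    rw [Set.disjoint_left]
    rintro q ⟨_, h1⟩ ⟨_, h2⟩
    exact h2 h1
  have hsum : spc G v b = spc G v a + S₂.ncard := by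
    have h1 : S.ncard = S₁.ncard + S₂.ncard := by
      rw [← hunion]
      exact Set.ncard_union_eq hdisj (hSfin.subset (by rw [← hunion]; exact Set.subset_union_left))
        (hSfin.subset (by rw [← hunion]; exact Set.subset_union_right))
    rw [hspcb, h1, hcard1]
  obtain ⟨q0, hq0⟩ : S₂.Nonempty := Set.nonempty_of_ncard_ne_zero (by omega)
  -- edges of walks in S₂ lie in G'
  have hsub : ∀ q : G.Walk v b, s(a, b) ∉ q.edges → ∀ e ∈ q.edges, e ∈ G'.edgeSet := by
    intro q hq e he
    rw [hG', SimpleGraph.edgeSet_deleteEdges]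
    refine ⟨q.edges_subset_edgeSet he, ?_⟩
    intro hmem
    rw [Set.mem_singleton_iff] at hmem
    exact hq (hmem ▸ he)
  -- the edist equality
  have hGedist : G.edist v b = (G.dist v b : ℕ∞) := by
    have hnt : G.edist v b ≠ ⊤ := SimpleGraph.edist_ne_top_iff_reachable.mpr hreachb
    exact (ENat.coe_toNat hnt).symm
  have hedist : G'.edist v b = G.edist v b := by
    refine le_antisymm ?_ (SimpleGraph.edist_anti hle)
    calc G'.edist v b ≤ ((q0.transfer G' (hsub q0 hq0.2)).length : ℕ∞) :=
          SimpleGraph.edist_le _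
      _ = (G.dist v b : ℕ∞) := by rw [SimpleGraph.Walk.length_transfer, hq0.1.2]
      _ = G.edist v b := hGedist.symm
  have hdist : G'.dist v b = G.dist v b := by
    show (G'.edist v b).toNat = (G.edist v b).toNat
    rw [hedist]
  refine ⟨hedist, ?_⟩
  -- bijection between S₂ and the shortest paths in G'
  set S' : Set (G'.Walk v b) := {p : G'.Walk v b | p.IsPath ∧ p.length = G'.dist v b} with hS'def
  have hspc' : spc G' v b = S'.ncard := rfl
  have hGsub : ∀ q : G'.Walk v b, ∀ e ∈ q.edges, e ∈ G.edgeSet := by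
    intro q e he
    exact edgeSet_mono hle (q.edges_subset_edgeSet he)
  set U : G'.Walk v b → G.Walk v b := fun q => q.transfer G (hGsub q) with hUdef
  have hUinj : Function.Injective U := by
    intro q1 q2 h
    rw [hUdef] at h
    simp only [SimpleGraph.Walk.transfer_eq_map_ofLE _ _ hle] at h
    exact SimpleGraph.Walk.map_injective_of_injective
      (f := Hom.ofLE hle) (fun x y hxy => hxy) v b h
  have hUmem : ∀ q ∈ S', U q ∈ S₂ := by
    rintro q ⟨hq1, hq2⟩
    refine ⟨⟨hq1.transfer _, ?_⟩, ?_⟩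
    · rw [hUdef]
      simp only [SimpleGraph.Walk.length_transfer]
      rw [hq2, hdist]
    · intro hab
      have : s(a, b) ∈ q.edges := by
        rw [hUdef] at hab
        rwa [SimpleGraph.Walk.edges_transfer] at hab
      have hmem := q.edges_subset_edgeSet this
      rw [hG', SimpleGraph.edgeSet_deleteEdges] at hmem
      exact hmem.2 rfl
  have hUsurj : ∀ q ∈ S₂, ∃ q' ∈ S', U q' = q := by
    rintro q ⟨⟨hq1, hq2⟩, hq3⟩
    refine ⟨q.transfer G' (hsub q hq3), ⟨hq1.transfer _, ?_⟩, ?_⟩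
    · rw [SimpleGraph.Walk.length_transfer, hq2, hdist]
    · rw [hUdef]
      simp only [SimpleGraph.Walk.transfer_transfer]
      exact q.transfer_self
  have himg' : U '' S' = S₂ := by
    apply Set.Subset.antisymm
    · rintro _ ⟨q, hq, rfl⟩
      exact hUmem q hq
    · intro q hq
      obtain ⟨q', hq', hqq⟩ := hUsurj q hq
      exact ⟨q', hq', hqq⟩
  have : S₂.ncard = S'.ncard := by
    rw [← himg', Set.ncard_image_of_injOn (hUinj.injOn)]
  rw [hspc', ← this]
  omega
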